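/- Let X : ℝⁿ → ℝⁿ be locally Lipschitz and suppose every element of the Clarke generalized Jacobian ∂X(p̄) at p̄ is invertible. Then there exist λ > 0 and δ > 0 such that for all p with ‖p - p̄‖ < δ and all V ∈ ∂X(p), V is invertible and ‖V⁻¹‖ ≤ λ. -/

import Mathlib

open Filter Topology

/-- The Clarke generalized Jacobian of `X` at `p`: the convex hull of all limits of
Jacobians `DX(pₖ)` along sequences `pₖ → p` of points of differentiability of `X`. -/
def clarkeJacobian {n : ℕ}
    (X : EuclideanSpace ℝ (Fin n) → EuclideanSpace ℝ (Fin n))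
    (p : EuclideanSpace ℝ (Fin n)) :
    Set (EuclideanSpace ℝ (Fin n) →L[ℝ] EuclideanSpace ℝ (Fin n)) :=
  convexHull ℝ { H | ∃ (q : ℕ → EuclideanSpace ℝ (Fin n))
      (D : ℕ → (EuclideanSpace ℝ (Fin n) →L[ℝ] EuclideanSpace ℝ (Fin n))),
      (∀ k, HasFDerivAt X (D k) (q k)) ∧
      Tendsto q atTop (𝓝 p) ∧ Tendsto D atTop (𝓝 H) }

open Metric Set Bornology

/-- The pre-convex-hull set appearing in the definition of the Clarke Jacobian. -/
def clarkeSet {n : ℕ}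
    (X : EuclideanSpace ℝ (Fin n) → EuclideanSpace ℝ (Fin n))
    (p : EuclideanSpace ℝ (Fin n)) :
    Set (EuclideanSpace ℝ (Fin n) →L[ℝ] EuclideanSpace ℝ (Fin n)) :=
  { H | ∃ (q : ℕ → EuclideanSpace ℝ (Fin n))
      (D : ℕ → (EuclideanSpace ℝ (Fin n) →L[ℝ] EuclideanSpace ℝ (Fin n))),
      (∀ k, HasFDerivAt X (D k) (q k)) ∧
      Tendsto q atTop (𝓝 p) ∧ Tendsto D atTop (𝓝 H) }

theorem clarkeJacobian_eq {n : ℕ}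
    (X : EuclideanSpace ℝ (Fin n) → EuclideanSpace ℝ (Fin n))
    (p : EuclideanSpace ℝ (Fin n)) :
    clarkeJacobian X p = convexHull ℝ (clarkeSet X p) := rfl

/-- The convex hull of a compact set in a finite-dimensional real normed space is compact. -/
theorem isCompact_convexHull_aux {F : Type*} [NormedAddCommGroup F] [NormedSpace ℝ F]
    [FiniteDimensional ℝ F] {s : Set F} (hs : IsCompact s) :
    IsCompact (convexHull ℝ s) := by
  classical
  set d := Module.finrank ℝ F with hd
  set T : Set ((Fin (d+1) → ℝ) × (Fin (d+1) → F)) :=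
    (stdSimplex ℝ (Fin (d+1))) ×ˢ (Set.pi Set.univ fun _ => s) with hT
  have hTc : IsCompact T := (isCompact_stdSimplex (𝕜 := ℝ) (ι := Fin (d+1))).prod (isCompact_univ_pi fun _ => hs)
  set f : ((Fin (d+1) → ℝ) × (Fin (d+1) → F)) → F := fun p => ∑ j, p.1 j • p.2 j with hf
  have hfc : Continuous f := continuous_finset_sum _ fun j _ =>
    ((continuous_apply j).comp continuous_fst).smul ((continuous_apply j).comp continuous_snd)
  have himg : convexHull ℝ s = f '' T := by
    apply Set.Subset.antisymm
    · intro x hx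
      obtain ⟨ι, hfin, z, w, hz, hai, hw0, hw1, hsum⟩ :=
        eq_pos_convex_span_of_mem_convexHull hx
      have hne : Nonempty ι := by
        by_contra h
        rw [not_nonempty_iff] at h
        rw [Finset.univ_eq_empty, Finset.sum_empty] at hw1
        exact one_ne_zero hw1.symm
      obtain ⟨i₀⟩ := hne
      have hcard : Fintype.card ι ≤ d + 1 := by
        have h1 := hai.card_le_finrank_succ
        exact h1.trans (Nat.add_le_add_right (Submodule.finrank_le _) 1)
      set c := Fintype.card ι with hc
      set e : ι ≃ Fin c := Fintype.equivFin ι with he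
      have hcr : c + ((d+1) - c) = d + 1 := Nat.add_sub_cancel' hcard
      set E2 : (Fin c ⊕ Fin ((d+1)-c)) ≃ Fin (d+1) :=
        finSumFinEquiv.trans (finCongr hcr) with hE2
      set A : (Fin c ⊕ Fin ((d+1)-c)) → ℝ := Sum.elim (w ∘ e.symm) 0 with hA
      set B : (Fin c ⊕ Fin ((d+1)-c)) → F := Sum.elim (z ∘ e.symm) (fun _ => z i₀) with hB
      refine ⟨⟨A ∘ E2.symm, B ∘ E2.symm⟩, ⟨?_, ?_⟩, ?_⟩
      · constructor
        · intro j
          rcases h : E2.symm j with i | i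
          · simp only [Function.comp_apply, h, hA, Sum.elim_inl, Function.comp_apply]
            exact (hw0 _).le
          · simp [hA, h]
        · have h1 : ∑ j, (A ∘ E2.symm) j = ∑ i, A i := E2.symm.sum_comp A
          rw [h1, Fintype.sum_sum_type]
          simp only [hA, Sum.elim_inl, Sum.elim_inr, Function.comp_apply, Pi.zero_apply]
          rw [Finset.sum_const_zero, add_zero, e.symm.sum_comp w, hw1]
      · intro j _
        rcases h : E2.symm j with i | i <;>
          simp only [Function.comp_apply, h, hB, Sum.elim_inl, Sum.elim_inr] <;>
          exact hz ⟨_, rfl⟩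
      · show ∑ j, (A ∘ E2.symm) j • (B ∘ E2.symm) j = x
        have h1 : ∑ j, (A ∘ E2.symm) j • (B ∘ E2.symm) j
            = ∑ i, A i • B i := E2.symm.sum_comp (fun i => A i • B i)
        rw [h1, Fintype.sum_sum_type]
        simp only [hA, hB, Sum.elim_inl, Sum.elim_inr, Function.comp_apply, Pi.zero_apply,
          zero_smul, Finset.sum_const_zero, add_zero]
        rw [e.symm.sum_comp (fun i => w i • z i)] at *
        exact hsum
    · rintro _ ⟨⟨w, g⟩, ⟨hw, hg⟩, rfl⟩
      exact (convex_convexHull ℝ s).sum_mem (fun i _ => hw.1 i) hw.2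
        (fun i _ => subset_convexHull ℝ s (hg i (Set.mem_univ i)))
  rw [himg]
  exact hTc.image hfc

/-- Upper semicontinuity (closedness of the graph) of `clarkeSet`. -/
theorem clarkeSet_usc {n : ℕ} {X : EuclideanSpace ℝ (Fin n) → EuclideanSpace ℝ (Fin n)}
    {pbar : EuclideanSpace ℝ (Fin n)} {pm : ℕ → EuclideanSpace ℝ (Fin n)}
    {Hm : ℕ → (EuclideanSpace ℝ (Fin n) →L[ℝ] EuclideanSpace ℝ (Fin n))}
    {H : EuclideanSpace ℝ (Fin n) →L[ℝ] EuclideanSpace ℝ (Fin n)}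
    (hmem : ∀ m, Hm m ∈ clarkeSet X (pm m))
    (hp : Tendsto pm atTop (𝓝 pbar)) (hH : Tendsto Hm atTop (𝓝 H)) :
    H ∈ clarkeSet X pbar := by
  have key : ∀ m : ℕ, ∃ (qk : EuclideanSpace ℝ (Fin n))
      (Dk : EuclideanSpace ℝ (Fin n) →L[ℝ] EuclideanSpace ℝ (Fin n)),
      HasFDerivAt X Dk qk ∧ dist qk (pm m) < 1/((m:ℝ)+1) ∧ dist Dk (Hm m) < 1/((m:ℝ)+1) := by
    intro m
    obtain ⟨q, D, hdv, hq, hD⟩ := hmem m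
    have hpos : (0:ℝ) < 1/((m:ℝ)+1) := by positivity
    obtain ⟨k, hk1, hk2⟩ := ((Metric.tendsto_nhds.mp hq _ hpos).and
      (Metric.tendsto_nhds.mp hD _ hpos)).exists
    exact ⟨q k, D k, hdv k, hk1, hk2⟩
  choose Q Dd hderiv hq hD using key
  have hone : Tendsto (fun m : ℕ => 1/((m:ℝ)+1)) atTop (𝓝 0) :=
    tendsto_one_div_add_atTop_nhds_zero_nat
  refine ⟨Q, Dd, hderiv, ?_, ?_⟩
  · rw [tendsto_iff_dist_tendsto_zero]
    refine squeeze_zero (fun m => dist_nonneg)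
      (fun m => (dist_triangle (Q m) (pm m) pbar).trans
        (add_le_add (hq m).le le_rfl)) ?_
    have := hone.add (tendsto_iff_dist_tendsto_zero.mp hp)
    simpa using this
  · rw [tendsto_iff_dist_tendsto_zero]
    refine squeeze_zero (fun m => dist_nonneg)
      (fun m => (dist_triangle (Dd m) (Hm m) H).trans
        (add_le_add (hD m).le le_rfl)) ?_
    have := hone.add (tendsto_iff_dist_tendsto_zero.mp hH)
    simpa using this

/-- Elements of `clarkeSet X p` are bounded by a local Lipschitz constant. -/
theorem clarkeSet_bound {n : ℕ} {X : EuclideanSpace ℝ (Fin n) → EuclideanSpace ℝ (Fin n)}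
    {pbar : EuclideanSpace ℝ (Fin n)} {K : NNReal} {r : ℝ}
    (hlip : LipschitzOnWith K X (ball pbar r))
    {p : EuclideanSpace ℝ (Fin n)} (hp : dist p pbar < r)
    {H : EuclideanSpace ℝ (Fin n) →L[ℝ] EuclideanSpace ℝ (Fin n)}
    (hH : H ∈ clarkeSet X p) : ‖H‖ ≤ K := by
  obtain ⟨q, D, hdv, hq, hD⟩ := hH
  have hball : Metric.ball pbar r ∈ 𝓝 p :=
    Metric.isOpen_ball.mem_nhds (by simpa [Metric.mem_ball] using hp)
  have hev : ∀ᶠ k in atTop, ‖D k‖ ≤ (K : ℝ) := by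
    filter_upwards [hq.eventually_mem hball] with k hk
    exact (hdv k).le_of_lipschitzOn (Metric.isOpen_ball.mem_nhds hk) hlip
  exact le_of_tendsto hD.norm hev

/-- Near `pbar`, `clarkeSet X p` is contained in any thickening of `clarkeSet X pbar`. -/
theorem clarkeSet_approx {n : ℕ} {X : EuclideanSpace ℝ (Fin n) → EuclideanSpace ℝ (Fin n)}
    {pbar : EuclideanSpace ℝ (Fin n)} {K : NNReal} {r : ℝ} (hr : 0 < r)
    (hlip : LipschitzOnWith K X (ball pbar r)) :
    ∀ ε > (0:ℝ), ∃ δ > (0:ℝ), ∀ p, dist p pbar < δ →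
      clarkeSet X p ⊆ Metric.thickening ε (clarkeSet X pbar) := by
  intro ε hε
  by_contra hcon
  push_neg at hcon
  have key : ∀ m : ℕ, ∃ p, dist p pbar < min r (1/((m:ℝ)+1)) ∧
      ∃ H ∈ clarkeSet X p, H ∉ Metric.thickening ε (clarkeSet X pbar) := by
    intro m
    have hpos : (0:ℝ) < min r (1/((m:ℝ)+1)) := lt_min hr (by positivity)
    obtain ⟨p, hp, hns⟩ := hcon _ hpos
    obtain ⟨H, hH1, hH2⟩ := Set.not_subset.mp hns
    exact ⟨p, hp, H, hH1, hH2⟩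
  choose pm hpm Hm hHmem hHout using key
  have hb : ∀ m, Hm m ∈ closedBall (0 : EuclideanSpace ℝ (Fin n) →L[ℝ]
      EuclideanSpace ℝ (Fin n)) K := fun m =>
    mem_closedBall_zero_iff.mpr
      (clarkeSet_bound hlip ((hpm m).trans_le (min_le_left _ _)) (hHmem m))
  obtain ⟨H, -, φ, hφ, hconv⟩ := tendsto_subseq_of_bounded isBounded_closedBall hb
  have hpm' : Tendsto pm atTop (𝓝 pbar) := by
    rw [tendsto_iff_dist_tendsto_zero]
    exact squeeze_zero (fun m => dist_nonneg)
      (fun m => ((hpm m).le.trans (min_le_right _ _)))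
      tendsto_one_div_add_atTop_nhds_zero_nat
  have hmem : H ∈ clarkeSet X pbar :=
    clarkeSet_usc (fun m => hHmem (φ m)) (hpm'.comp hφ.tendsto_atTop) hconv
  obtain ⟨m, hm⟩ := (Metric.tendsto_nhds.mp hconv ε hε).exists
  exact hHout (φ m) (Metric.mem_thickening_iff.mpr ⟨H, hmem, hm⟩)

/-- regularity of `X` at `p̄` (all elements of the Clarke generalized
Jacobian invertible) propagates to a neighborhood, with a uniform inverse bound. -/
theorem regularity_propagates {n : ℕ}
    (X : EuclideanSpace ℝ (Fin n) → EuclideanSpace ℝ (Fin n))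
    (hX : LocallyLipschitz X)
    (pbar : EuclideanSpace ℝ (Fin n))
    (hreg : ∀ V ∈ clarkeJacobian X pbar,
      ∃ W : EuclideanSpace ℝ (Fin n) ≃L[ℝ] EuclideanSpace ℝ (Fin n),
        (W : EuclideanSpace ℝ (Fin n) →L[ℝ] EuclideanSpace ℝ (Fin n)) = V) :
    ∃ lam > (0 : ℝ), ∃ δ > (0 : ℝ), ∀ p : EuclideanSpace ℝ (Fin n), ‖p - pbar‖ < δ →
      ∀ V ∈ clarkeJacobian X p,
        ∃ W : EuclideanSpace ℝ (Fin n) ≃L[ℝ] EuclideanSpace ℝ (Fin n),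
          (W : EuclideanSpace ℝ (Fin n) →L[ℝ] EuclideanSpace ℝ (Fin n)) = V ∧
          ‖(W.symm : EuclideanSpace ℝ (Fin n) →L[ℝ] EuclideanSpace ℝ (Fin n))‖ ≤ lam := by
  classical
  obtain ⟨K, t, ht, hlipt⟩ := hX pbar
  obtain ⟨r, hr, hball⟩ := Metric.mem_nhds_iff.mp ht
  have hlip : LipschitzOnWith K X (ball pbar r) := hlipt.mono hball
  set S0 := clarkeSet X pbar with hS0
  have hS0closed : IsClosed S0 := by
    refine IsSeqClosed.isClosed ?_
    intro Hm H hmem hlim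
    exact clarkeSet_usc hmem tendsto_const_nhds hlim
  have hS0bdd : S0 ⊆ closedBall 0 K := fun H hH =>
    mem_closedBall_zero_iff.mpr (clarkeSet_bound hlip (by simpa using hr) hH)
  have hS0cpt : IsCompact S0 :=
    (isCompact_closedBall _ _).of_isClosed_subset hS0closed hS0bdd
  have hKcpt : IsCompact (convexHull ℝ S0) := isCompact_convexHull_aux hS0cpt
  have hKU : convexHull ℝ S0 ⊆ {V : EuclideanSpace ℝ (Fin n) →L[ℝ]
      EuclideanSpace ℝ (Fin n) | IsUnit V} := by
    intro V hV
    obtain ⟨W, hW⟩ := hreg V hV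
    exact ⟨(ContinuousLinearEquiv.unitsEquiv ℝ _).symm W, by rw [← hW]; rfl⟩
  have hUopen : IsOpen {V : EuclideanSpace ℝ (Fin n) →L[ℝ]
      EuclideanSpace ℝ (Fin n) | IsUnit V} := Units.isOpen
  obtain ⟨ε, hε, hthick⟩ := hKcpt.exists_cthickening_subset_open hUopen hKU
  have hCcpt : IsCompact (Metric.cthickening ε (convexHull ℝ S0)) := by
    rw [Metric.isCompact_iff_isClosed_bounded]
    exact ⟨Metric.isClosed_cthickening, hKcpt.isBounded.cthickening⟩
  have hcont : ContinuousOn Ring.inverse (Metric.cthickening ε (convexHull ℝ S0)) := by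
    intro V hV
    obtain ⟨u, hu⟩ := hthick hV
    rw [← hu]
    exact (NormedRing.inverse_continuousAt u).continuousWithinAt
  obtain ⟨lam0, hlam0⟩ := hCcpt.exists_bound_of_continuousOn hcont
  obtain ⟨δ, hδ, hδprop⟩ := clarkeSet_approx hr hlip ε hε
  refine ⟨max lam0 1, lt_of_lt_of_le one_pos (le_max_right _ _), δ, hδ, ?_⟩
  intro p hp V hV
  have hsub : clarkeJacobian X p ⊆ Metric.cthickening ε (convexHull ℝ S0) := by
    rw [clarkeJacobian_eq]
    refine convexHull_min ?_ ((convex_convexHull ℝ S0).cthickening ε)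
    refine (hδprop p (by rwa [dist_eq_norm])).trans ?_
    exact (Metric.thickening_subset_cthickening ε S0).trans
      (Metric.cthickening_mono le_rfl _ |>.trans
        (Metric.cthickening_subset_of_subset ε (subset_convexHull ℝ S0)))
  have hVC := hsub hV
  obtain ⟨u, hu⟩ := hthick hVC
  refine ⟨ContinuousLinearEquiv.unitsEquiv ℝ _ u, by rw [← hu]; rfl, ?_⟩
  have h1 : (((ContinuousLinearEquiv.unitsEquiv ℝ _ u).symm :
      EuclideanSpace ℝ (Fin n) ≃L[ℝ] EuclideanSpace ℝ (Fin n)) :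
      EuclideanSpace ℝ (Fin n) →L[ℝ] EuclideanSpace ℝ (Fin n)) = Ring.inverse V := by
    rw [← hu, Ring.inverse_unit]
    rfl
  rw [h1]
  exact (hlam0 V hVC).trans (le_max_left _ _)
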